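/- Let b^{[k]}, k ∈ ℕ₀, and b be Laurent polynomials (finitely supported ∑_j c_j z^j with complex coefficients) such that there exist constants B > 0 and δ > 0 with |b^{[k]}(e^{iω}) - b(e^{iω})| ≤ B·2^{-k} for all k ∈ ℕ₀ and ω ∈ ℝ, and |b(e^{iω})| ≥ δ for all ω ∈ ℝ. Then there exists a constant M > 0 such that for every m ∈ ℕ₀, every K ≥ 1 and every ω ∈ ℝ the partial products satisfy ∏_{k=1}^{K} |b^{[m+k-1]}(e^{iω·2^{-k}}) / b(e^{iω·2^{-k}})| ≤ M. -/

import Mathlib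

/-- If the Laurent polynomials `b^{[k]}` converge to the Laurent polynomial `b` on the
unit circle at rate `B·2^{-k}` and `|b| ≥ δ > 0` on the circle, then all partial products
`∏_{k=1}^K |b^{[m+k-1]}(e^{iω2^{-k}})/b(e^{iω2^{-k}})|` are bounded by a constant `M`
independent of `m`, `K` and `ω`. -/
theorem stmt_9 (cb : ℕ → ℤ → ℂ) (c : ℤ → ℂ)
    (hfinb : ∀ k : ℕ, (Function.support (cb k)).Finite)
    (hfinc : (Function.support c).Finite)
    (Bf : ℕ → ℝ → ℂ) (bf : ℝ → ℂ)
    (hBf : ∀ (k : ℕ) (ω : ℝ), Bf k ω = ∑' j : ℤ, cb k j * Complex.exp (Complex.I * j * ω))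
    (hbf : ∀ ω : ℝ, bf ω = ∑' j : ℤ, c j * Complex.exp (Complex.I * j * ω))
    (B : ℝ) (hB : 0 < B)
    (hclose : ∀ (k : ℕ) (ω : ℝ), ‖Bf k ω - bf ω‖ ≤ B / 2 ^ k)
    (δ : ℝ) (hδ : 0 < δ) (hlow : ∀ ω : ℝ, δ ≤ ‖bf ω‖) :
    ∃ M : ℝ, 0 < M ∧ ∀ (m : ℕ) (K : ℕ), 1 ≤ K → ∀ ω : ℝ,
      (∏ k ∈ Finset.range K,
        ‖Bf (m + k) (ω / 2 ^ (k + 1))‖ / ‖bf (ω / 2 ^ (k + 1))‖) ≤ M := by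
  refine ⟨Real.exp (2 * (B / δ)), Real.exp_pos _, fun m K _ ω => ?_⟩
  have hfac : ∀ k : ℕ, ∀ ω' : ℝ,
      ‖Bf (m + k) ω'‖ / ‖bf ω'‖ ≤ 1 + (B / δ) * (1 / 2) ^ k := by
    intro k ω'
    have hbfpos : 0 < ‖bf ω'‖ := lt_of_lt_of_le hδ (hlow ω')
    rw [div_le_iff₀ hbfpos]
    have h1 : ‖Bf (m + k) ω'‖ ≤ ‖bf ω'‖ + B / 2 ^ (m + k) := by
      calc ‖Bf (m + k) ω'‖
          ≤ ‖bf ω'‖ + ‖Bf (m + k) ω' - bf ω'‖ := by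
            have := norm_add_le (bf ω') (Bf (m + k) ω' - bf ω')
            simpa using this
        _ ≤ _ := by linarith [hclose (m + k) ω']
    have h2 : B / 2 ^ (m + k) ≤ B * (1 / 2) ^ k := by
      rw [div_le_iff₀ (by positivity)]
      have : (2 : ℝ) ^ k ≤ 2 ^ (m + k) := by
        apply pow_le_pow_right₀ (by norm_num) (Nat.le_add_left _ _)
      calc B = B * (1 / 2) ^ k * 2 ^ k := by
            rw [mul_assoc, ← mul_pow]; norm_num
        _ ≤ _ := by
            apply mul_le_mul_of_nonneg_left this (by positivity)
    have h3 : B * (1 / 2) ^ k ≤ (B / δ) * (1 / 2) ^ k * ‖bf ω'‖ := by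
      calc B * (1 / 2) ^ k = (B / δ) * (1 / 2) ^ k * δ := by field_simp
        _ ≤ _ := mul_le_mul_of_nonneg_left (hlow ω') (by positivity)
    nlinarith
  calc (∏ k ∈ Finset.range K,
        ‖Bf (m + k) (ω / 2 ^ (k + 1))‖ / ‖bf (ω / 2 ^ (k + 1))‖)
      ≤ ∏ k ∈ Finset.range K, Real.exp ((B / δ) * (1 / 2) ^ k) := by
        apply Finset.prod_le_prod
        · intro k _; positivity
        · intro k _
          exact le_trans (hfac k _) (by have := Real.add_one_le_exp ((B / δ) * (1 / 2) ^ k); linarith)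
    _ = Real.exp (∑ k ∈ Finset.range K, (B / δ) * (1 / 2) ^ k) := (Real.exp_sum _ _).symm
    _ ≤ Real.exp (2 * (B / δ)) := by
        apply Real.exp_le_exp.mpr
        rw [← Finset.mul_sum]
        calc (B / δ) * ∑ k ∈ Finset.range K, (1 / 2 : ℝ) ^ k
            ≤ (B / δ) * 2 := by
              apply mul_le_mul_of_nonneg_left _ (by positivity)
              simpa using sum_geometric_two_le K
          _ = 2 * (B / δ) := by ring
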